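/- arXiv:2501.08849 — 3 statements merged into one kernel-verified Lean document; each statement's English description precedes it below -/
import Mathlib

section
/- If a q-periodic symplectic billiard orbit in the ellipse parametrized by e_{a,b} consists of the equidistributed points t_j = t_0 + 2πAj/q for j = 0,…,q-1 (with A = (ab)^{1/3}), then its action equals A³ q sin(2π/q). -/
open Real

theorem stmt1 (a b : ℝ) (ha : 0 < a) (hb : 0 < b)
    (A : ℝ) (hA : A = (a * b) ^ ((1:ℝ)/3))
    (e : ℝ → ℝ × ℝ) (he : ∀ t, e t = (a * Real.cos (t / A), b * Real.sin (t / A)))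
    (ω : ℝ × ℝ → ℝ × ℝ → ℝ) (hω : ∀ u v, ω u v = u.1 * v.2 - u.2 * v.1)
    (q : ℕ) (hq : 3 ≤ q) (t0 : ℝ)
    (t : ℕ → ℝ) (ht : ∀ j, t j = t0 + 2 * π * A * j / q) :
    ∑ j ∈ Finset.range q, ω (e (t j)) (e (t ((j + 1) % q))) =
      A ^ 3 * q * Real.sin (2 * π / q) := by
  have hab : (0:ℝ) < a * b := mul_pos ha hb
  have hApos : 0 < A := by rw [hA]; exact Real.rpow_pos_of_pos hab _
  have hA3 : A ^ 3 = a * b := by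
    rw [hA, ← Real.rpow_natCast ((a*b) ^ ((1:ℝ)/3)) 3, ← Real.rpow_mul hab.le]
    norm_num
  have hq0 : (0:ℝ) < (q:ℝ) := by positivity
  have key : ∀ j ∈ Finset.range q,
      ω (e (t j)) (e (t ((j + 1) % q))) = A ^ 3 * Real.sin (2 * π / q) := by
    intro j hj
    rw [Finset.mem_range] at hj
    set x := t j / A with hx
    set y := t ((j + 1) % q) / A with hy
    have hterm : ω (e (t j)) (e (t ((j + 1) % q))) = a * b * Real.sin (y - x) := by
      rw [hω, he, he, Real.sin_sub]; ring
    rw [hterm, hA3]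
    congr 1
    rcases lt_or_eq_of_le (Nat.succ_le_of_lt hj) with hlt | heq
    · have hmod : (j + 1) % q = j + 1 := Nat.mod_eq_of_lt hlt
      have : y - x = 2 * π / q := by
        rw [hy, hx, hmod, ht, ht]
        push_cast
        field_simp
        ring
      rw [this]
    · have heq' : j + 1 = q := heq
      have hmod : (j + 1) % q = 0 := by rw [heq', Nat.mod_self]
      have : y - x = 2 * π / q - 2 * π := by
        rw [hy, hx, hmod, ht, ht]
        push_cast
        have hj' : (j : ℝ) = (q : ℝ) - 1 := by
          have : (j : ℝ) + 1 = q := by exact_mod_cast congrArg Nat.cast (Nat.succ_eq_add_one j ▸ heq)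
          linarith
        rw [hj']
        field_simp
        ring
      rw [this, Real.sin_sub_two_pi]
  rw [Finset.sum_congr rfl key, Finset.sum_const, Finset.card_range, nsmul_eq_mul]
  ring
end

section
/- Let Ω be the domain bounded by γ(t) = (1 + n(t)) e_{a,b}(t) with A = (ab)^{1/3} and n a 2πA-periodic C¹ function. Then area(Ω) ≤ π A³ (1 + ‖n‖_{C¹})², where ‖n‖_{C¹} = sup|n| + sup|n′|. -/
open Real

theorem stmt10 (a b : ℝ) (ha : 0 < a) (hb : 0 < b)
    (A : ℝ) (hA : A = (a * b) ^ ((1:ℝ)/3))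
    (e : ℝ → ℝ × ℝ) (he : ∀ t, e t = (a * Real.cos (t / A), b * Real.sin (t / A)))
    (n : ℝ → ℝ) (hn : ContDiff ℝ 1 n) (hper : Function.Periodic n (2 * π * A))
    (C1 : ℝ) (hC1 : C1 = (⨆ t : ℝ, |n t|) + ⨆ t : ℝ, |deriv n t|)
    (Ω : Set (ℝ × ℝ))
    (hΩ : Ω = {p | ∃ t l : ℝ, l ∈ Set.Icc (0:ℝ) 1 ∧ p = l • ((1 + n t) • e t)}) :
    MeasureTheory.volume Ω ≤ ENNReal.ofReal (π * A ^ 3 * (1 + C1) ^ 2) := by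
  have hA0 : 0 < A := by rw [hA]; positivity
  have hA3 : A ^ 3 = a * b := by
    rw [hA, ← Real.rpow_natCast ((a*b) ^ ((1:ℝ)/3)) 3, ← Real.rpow_mul (by positivity)]
    norm_num
  -- bound sup |n|
  have hP : 0 < 2 * π * A := by positivity
  have habs : Function.Periodic (fun t => |n t|) (2 * π * A) := fun t => by simp [hper t]
  have hbdd : BddAbove (Set.range fun t => |n t|) := by
    rw [← habs.image_Icc hP 0]
    exact (isCompact_Icc.image hn.continuous.abs).bddAbove
  set M : ℝ := ⨆ t : ℝ, |n t| with hMdef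
  have hM : ∀ t, |n t| ≤ M := fun t => le_ciSup hbdd t
  have hM0 : 0 ≤ M := (abs_nonneg (n 0)).trans (hM 0)
  have hMC1 : M ≤ C1 := by
    rw [hC1]
    have : (0:ℝ) ≤ ⨆ t : ℝ, |deriv n t| := Real.iSup_nonneg fun t => abs_nonneg _
    linarith
  set r : ℝ := 1 + M with hrdef
  have hr0 : 0 ≤ r := by positivity
  -- the disk
  set D : Set (ℝ × ℝ) := {p : ℝ × ℝ | p.1 ^ 2 + p.2 ^ 2 ≤ r ^ 2} with hDdef
  have hD : MeasurableSet D :=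
    (isClosed_le (by fun_prop) continuous_const).measurableSet
  have hvolD : MeasureTheory.volume D = ENNReal.ofReal (π * r ^ 2) := by
    have hpre : Complex.measurableEquivRealProd ⁻¹' D = Metric.closedBall (0 : ℂ) r := by
      ext z
      show z.re ^ 2 + z.im ^ 2 ≤ r ^ 2 ↔ z ∈ Metric.closedBall (0:ℂ) r
      rw [Metric.mem_closedBall, Complex.dist_eq, sub_zero,
        ← pow_le_pow_iff_left₀ (norm_nonneg z) hr0 two_ne_zero,
        Complex.sq_norm, Complex.normSq_apply]
      ring_nf
    calc MeasureTheory.volume D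
        = MeasureTheory.volume (Metric.closedBall (0 : ℂ) r) := by
          rw [← Complex.volume_preserving_equiv_real_prod.measure_preimage hD.nullMeasurableSet,
            hpre]
      _ = ENNReal.ofReal (π * r ^ 2) := by
          rw [Complex.volume_closedBall, ← ENNReal.ofReal_pow hr0]
          rw [show ((NNReal.pi : ENNReal)) = ENNReal.ofReal π by
            rw [← NNReal.coe_real_pi, ENNReal.ofReal_coe_nnreal]]
          rw [← ENNReal.ofReal_mul (by positivity), mul_comm]
  -- the linear map
  set f : ℝ × ℝ →ₗ[ℝ] ℝ × ℝ := LinearMap.prodMap (a • LinearMap.id) (b • LinearMap.id) with hfdef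
  have hdet : LinearMap.det f = a * b := by
    rw [← LinearMap.det_toMatrix (Module.Basis.finTwoProd ℝ), Matrix.det_fin_two]
    simp [LinearMap.toMatrix_apply, Module.Basis.finTwoProd, hfdef]
  -- inclusion
  have hsub : Ω ⊆ f '' D := by
    rw [hΩ]
    rintro p ⟨t, l, ⟨hl0, hl1⟩, rfl⟩
    refine ⟨(l * (1 + n t) * Real.cos (t / A), l * (1 + n t) * Real.sin (t / A)), ?_, ?_⟩
    · show (l * (1 + n t) * Real.cos (t / A)) ^ 2 + (l * (1 + n t) * Real.sin (t / A)) ^ 2 ≤ r ^ 2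
      have h1 : (l * (1 + n t) * Real.cos (t / A)) ^ 2 + (l * (1 + n t) * Real.sin (t / A)) ^ 2
          = (l * (1 + n t)) ^ 2 := by
        have := Real.sin_sq_add_cos_sq (t / A); nlinarith [this]
      rw [h1]
      have h2 : |l * (1 + n t)| ≤ r := by
        rw [abs_mul]
        have h3 : |1 + n t| ≤ 1 + |n t| := (abs_add_le _ _).trans (by simp)
        have h4 : |l| ≤ 1 := by rw [abs_of_nonneg hl0]; exact hl1
        have h5 : |n t| ≤ M := hM t
        calc |l| * |1 + n t| ≤ 1 * (1 + M) := by
              apply mul_le_mul h4 (h3.trans (by linarith)) (abs_nonneg _) zero_le_one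
          _ = r := by rw [one_mul]
      calc (l * (1 + n t)) ^ 2 = |l * (1 + n t)| ^ 2 := (sq_abs _).symm
        _ ≤ r ^ 2 := pow_le_pow_left₀ (abs_nonneg _) h2 2
    · rw [he t]
      simp only [hfdef, LinearMap.prodMap_apply, LinearMap.smul_apply, LinearMap.id_coe, id_eq,
        Prod.map_apply, Prod.smul_def, smul_eq_mul, Prod.mk.injEq]
      constructor <;> ring
  -- conclude
  calc MeasureTheory.volume Ω ≤ MeasureTheory.volume (f '' D) :=
        MeasureTheory.measure_mono hsub
    _ = ENNReal.ofReal |LinearMap.det f| * MeasureTheory.volume D :=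
        MeasureTheory.Measure.addHaar_image_linearMap _ f D
    _ = ENNReal.ofReal (a * b) * ENNReal.ofReal (π * r ^ 2) := by
        rw [hdet, hvolD, abs_of_pos (by positivity)]
    _ = ENNReal.ofReal (a * b * (π * r ^ 2)) := by
        rw [← ENNReal.ofReal_mul (by positivity)]
    _ ≤ ENNReal.ofReal (π * A ^ 3 * (1 + C1) ^ 2) := by
        apply ENNReal.ofReal_le_ofReal
        rw [hA3]
        have hr2 : r ^ 2 ≤ (1 + C1) ^ 2 := by
          apply pow_le_pow_left₀ hr0 (by rw [hrdef]; linarith)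
        have key := mul_le_mul_of_nonneg_left hr2
          (le_of_lt (mul_pos Real.pi_pos (mul_pos ha hb)))
        nlinarith [key]
end

section
/- Let q ≥ 3, A > 0, and let n : ℝ → ℝ be 2πA-periodic and continuous. Suppose the function t₀ ↦ F(t₀) := 2A³ sin(2π/q) Σ_{j=0}^{q-1} n(t₀ + 2πAj/q) differs from a constant c by at most ε in absolute value for all t₀. Then 2qA³ sin(2π/q) |∫₀^{2πA} n(t) e^{iqt/A} dt| ≤ 2πA ε. -/
open Real

theorem stmt15 (A : ℝ) (hA : 0 < A) (q : ℕ) (hq : 3 ≤ q)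
    (n : ℝ → ℝ) (hcont : Continuous n) (hper : Function.Periodic n (2 * π * A))
    (c ε : ℝ)
    (hF : ∀ t0 : ℝ,
      |2 * A ^ 3 * Real.sin (2 * π / q) *
          (∑ j ∈ Finset.range q, n (t0 + 2 * π * A * j / q)) - c| ≤ ε) :
    2 * q * A ^ 3 * Real.sin (2 * π / q) *
        ‖∫ t in (0:ℝ)..(2 * π * A),
            (n t : ℂ) * Complex.exp (Complex.I * q * t / A)‖ ≤
      2 * π * A * ε := by
  set T : ℝ := 2 * π * A with hT
  have hTpos : 0 < T := by positivity
  set C : ℝ := 2 * A ^ 3 * Real.sin (2 * π / q) with hCdef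
  have hq0 : (0:ℝ) < q := by
    have : 0 < q := lt_of_lt_of_le (by norm_num) hq
    exact_mod_cast this
  have hq3 : (3:ℝ) ≤ q := by exact_mod_cast hq
  have hsin : 0 < Real.sin (2 * π / q) := by
    apply Real.sin_pos_of_pos_of_lt_pi
    · positivity
    · calc 2 * π / q ≤ 2 * π / 3 := by
            apply div_le_div_of_nonneg_left (by positivity) (by norm_num) hq3
        _ < π := by nlinarith [pi_pos]
  have hC : 0 < C := by positivity
  have hA' : (A:ℂ) ≠ 0 := by exact_mod_cast hA.ne'
  have hqC' : (q:ℂ) ≠ 0 := by exact_mod_cast hq0.ne'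
  set e : ℝ → ℂ := fun t => Complex.exp (Complex.I * q * t / A) with he
  -- norm of e is 1
  have hnorme : ∀ t : ℝ, ‖e t‖ = 1 := by
    intro t
    have : e t = Complex.exp (((q * t / A : ℝ) : ℂ) * Complex.I) := by
      simp only [he]; push_cast; ring_nf
    rw [this]
    exact Complex.norm_exp_ofReal_mul_I _
  -- e has period T (exponential factor is 1)
  have hexpT : Complex.exp (Complex.I * q * T / A) = 1 := by
    have : Complex.I * q * (T:ℝ) / A = (q:ℂ) * (2 * π * Complex.I) := by
      have : ((T:ℝ):ℂ) = 2 * (π:ℂ) * (A:ℂ) := by push_cast [hT]; ring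
      rw [this]; field_simp
    rw [this, Complex.exp_nat_mul_two_pi_mul_I]
  have hfper : Function.Periodic (fun t => (n t : ℂ) * e t) T := by
    intro t
    have h1 : e (t + T) = e t := by
      simp only [he]
      push_cast
      rw [show Complex.I * q * ((t:ℝ) + (T:ℝ)) / A
            = Complex.I * q * (t:ℝ) / A + Complex.I * q * (T:ℝ) / A by push_cast; ring,
          Complex.exp_add, hexpT, mul_one]
    simp only [hper t, h1]
  have hec : Continuous e := by
    exact Complex.continuous_exp.comp
      ((continuous_const.mul Complex.continuous_ofReal).div_const _)
  have hnc : ∀ s : ℝ, Continuous fun t : ℝ => ((n (t + s) : ℝ) : ℂ) := fun s =>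
    Complex.continuous_ofReal.comp (hcont.comp (continuous_id.add continuous_const))
  have hfc : Continuous fun t => (n t : ℂ) * e t :=
    (Complex.continuous_ofReal.comp hcont).mul hec
  -- shift invariance
  have hshift : ∀ j : ℕ,
      (∫ t in (0:ℝ)..T, (n (t + 2 * π * A * j / q) : ℂ) * e t)
        = ∫ t in (0:ℝ)..T, (n t : ℂ) * e t := by
    intro j
    set s : ℝ := 2 * π * A * j / q with hs
    have hes : ∀ t : ℝ, e (t + s) = e t := by
      intro t
      simp only [he]
      push_cast
      rw [show Complex.I * q * ((t:ℝ) + (s:ℝ)) / A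
            = Complex.I * q * (t:ℝ) / A + Complex.I * q * (s:ℝ) / A by push_cast; ring,
          Complex.exp_add]
      have : Complex.I * q * (s:ℝ) / A = (j:ℂ) * (2 * π * Complex.I) := by
        have hsc : ((s:ℝ):ℂ) = 2 * (π:ℂ) * A * j / q := by push_cast [hs]; ring
        rw [hsc]; field_simp
      rw [this, Complex.exp_nat_mul_two_pi_mul_I, mul_one]
    have step1 : (∫ t in (0:ℝ)..T, (n (t + s) : ℂ) * e t)
        = ∫ t in (0:ℝ)..T, (fun u => (n u : ℂ) * e u) (t + s) := by
      apply intervalIntegral.integral_congr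
      intro t _
      simp only [hes t]
    rw [step1, intervalIntegral.integral_comp_add_right (fun u => (n u : ℂ) * e u) s]
    have := hfper.intervalIntegral_add_eq s 0
    simpa [zero_add, add_comm] using this
  -- integral of e alone is zero
  have hint_e : (∫ t in (0:ℝ)..T, e t) = 0 := by
    have hrw : ∀ t : ℝ, e t = Complex.exp ((Complex.I * q / A) * t) := by
      intro t; simp only [he]; ring_nf
    have hc0 : Complex.I * q / A ≠ 0 := by
      apply div_ne_zero _ hA'
      exact mul_ne_zero Complex.I_ne_zero hqC'
    rw [intervalIntegral.integral_congr (fun t _ => hrw t),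
        integral_exp_mul_complex hc0]
    have h1 : Complex.I * (q:ℂ) / A * (T:ℝ) = Complex.I * q * (T:ℝ) / A := by ring
    rw [h1, hexpT]
    simp
  -- main identity
  have key : (∫ t in (0:ℝ)..T,
        ((C * (∑ j ∈ Finset.range q, n (t + 2 * π * A * j / q)) - c : ℝ) : ℂ) * e t)
      = (C * q : ℂ) * ∫ t in (0:ℝ)..T, (n t : ℂ) * e t := by
    have hint1 : (∫ t in (0:ℝ)..T,
        ((∑ j ∈ Finset.range q, (n (t + 2 * π * A * j / q) : ℂ)) * e t))
        = (q : ℂ) * ∫ t in (0:ℝ)..T, (n t : ℂ) * e t := by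
      have : (∫ t in (0:ℝ)..T,
          (∑ j ∈ Finset.range q, (n (t + 2 * π * A * j / q) : ℂ) * e t))
          = ∑ j ∈ Finset.range q,
              ∫ t in (0:ℝ)..T, (n (t + 2 * π * A * j / q) : ℂ) * e t := by
        apply intervalIntegral.integral_finset_sum
        intro j _
        exact (((hnc _).mul hec)).intervalIntegrable _ _
      rw [intervalIntegral.integral_congr
            (g := fun t => ∑ j ∈ Finset.range q, (n (t + 2 * π * A * j / q) : ℂ) * e t)
            (fun t _ => by rw [Finset.sum_mul]),
          this]
      rw [Finset.sum_congr rfl (fun j _ => hshift j)]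
      simp [Finset.sum_const, Finset.card_range]
    have hsplit : ∀ t : ℝ,
        ((C * (∑ j ∈ Finset.range q, n (t + 2 * π * A * j / q)) - c : ℝ) : ℂ) * e t
        = (C:ℂ) * ((∑ j ∈ Finset.range q, (n (t + 2 * π * A * j / q) : ℂ)) * e t)
            - (c:ℂ) * e t := by
      intro t; push_cast; ring
    rw [intervalIntegral.integral_congr (fun t _ => hsplit t)]
    have hi1 : IntervalIntegrable
        (fun t => (∑ j ∈ Finset.range q, (n (t + 2 * π * A * j / q) : ℂ)) * e t)
        MeasureTheory.volume 0 T := by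
      exact ((continuous_finset_sum _ fun j _ => hnc _).mul hec).intervalIntegrable _ _
    have hi2 : IntervalIntegrable (fun t => (c:ℂ) * e t) MeasureTheory.volume 0 T := by
      exact (continuous_const.mul hec).intervalIntegrable _ _
    rw [intervalIntegral.integral_sub (hi1.const_mul _) hi2,
        intervalIntegral.integral_const_mul, intervalIntegral.integral_const_mul,
        hint_e, hint1]
    ring
  -- bound the left side of key
  have hbound : ‖(∫ t in (0:ℝ)..T,
        ((C * (∑ j ∈ Finset.range q, n (t + 2 * π * A * j / q)) - c : ℝ) : ℂ) * e t)‖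
      ≤ ε * |T - 0| := by
    apply intervalIntegral.norm_integral_le_of_norm_le_const
    intro t _
    rw [norm_mul, hnorme t, mul_one, Complex.norm_real, Real.norm_eq_abs]
    exact hF t
  rw [key] at hbound
  have hTabs : |T - 0| = T := by rw [sub_zero, abs_of_pos hTpos]
  rw [hTabs, norm_mul] at hbound
  have hCq : ‖(C:ℂ) * (q:ℂ)‖ = C * q := by
    rw [norm_mul, Complex.norm_real, Complex.norm_natCast, Real.norm_eq_abs,
      abs_of_pos hC]
  rw [hCq] at hbound
  calc 2 * q * A ^ 3 * Real.sin (2 * π / q) *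
        ‖∫ t in (0:ℝ)..(2 * π * A), (n t : ℂ) * Complex.exp (Complex.I * q * t / A)‖
      = C * q * ‖∫ t in (0:ℝ)..T, (n t : ℂ) * e t‖ := by
        rw [hCdef, he, hT]; ring
    _ ≤ ε * T := hbound
    _ = 2 * π * A * ε := by rw [hT]; ring
end
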